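/- arXiv:2401.03338 — 4 statements merged into one kernel-verified Lean document; each statement's English description precedes it below -/
import Mathlib

section
/- There exists a constant C > 0, depending only on sup_{t∈[0,T]} |σ'(t)|, such that for every 0 < δ ≤ T, the parabola approximation β on [0, δ] satisfies ‖∫₀^δ σ(u)·β'(u) du − (δ/2)·(σ(0)·A₋ + σ(δ)·A₊)‖_{L²} ≤ C·δ^{3/2}. -/
open MeasureTheory ProbabilityTheory Real
open scoped NNReal ENNReal

noncomputable section

lemma int_sq_exp_full {b : ℝ} (hb : 0 < b) :
    ∫ x : ℝ, x ^ 2 * Real.exp (-b * x ^ 2) = b ^ (-(3:ℝ)/2) * Real.sqrt π / 2 := by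
  have h1 : (fun x : ℝ => x ^ 2 * Real.exp (-b * x ^ 2))
      = fun x : ℝ => |x| ^ 2 * Real.exp (-b * |x| ^ 2) := by
    funext x; rw [sq_abs]
  rw [h1, integral_comp_abs (f := fun x : ℝ => x ^ 2 * Real.exp (-b * x ^ 2))]
  have h2 : ∫ x in Set.Ioi (0:ℝ), x ^ 2 * Real.exp (-b * x ^ 2)
      = b ^ (-((2:ℝ) + 1) / 2) * (1 / 2) * Real.Gamma (((2:ℝ) + 1) / 2) := by
    have := integral_rpow_mul_exp_neg_mul_rpow (p := 2) (q := 2) (b := b)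
      (by norm_num) (by norm_num) hb
    rw [← this]
    refine setIntegral_congr_fun measurableSet_Ioi (fun x hx => ?_) |>.symm
    norm_cast
  rw [h2]
  have hg : Real.Gamma (((2:ℝ) + 1) / 2) = Real.sqrt π / 2 := by
    have : ((2:ℝ) + 1) / 2 = 1 / 2 + 1 := by norm_num
    rw [this, Real.Gamma_add_one (by norm_num), Real.Gamma_one_half_eq]
    ring
  rw [hg]
  norm_num
  ring

lemma integrable_sq_gaussianReal (v : ℝ≥0) :
    Integrable (fun x : ℝ => x ^ 2) (gaussianReal 0 v) := by
  by_cases hv : v = 0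
  · rw [hv, gaussianReal_zero_var]
    exact (integrable_const (((0:ℝ))^2)).congr (ae_eq_dirac (fun x : ℝ => x ^ 2)).symm
  · rw [gaussianReal_of_var_ne_zero _ hv,
      show gaussianPDF 0 v = fun x => ((Real.toNNReal (gaussianPDFReal 0 v x) : ℝ≥0∞)) from rfl,
      integrable_withDensity_iff_integrable_smul ((measurable_gaussianPDFReal 0 v).real_toNNReal)]
    have hv' : (0:ℝ) < v := by positivity
    have hb : (0:ℝ) < (2 * (v:ℝ))⁻¹ := by positivity
    have h := (integrable_rpow_mul_exp_neg_mul_sq hb (s := 2) (by norm_num)).const_mul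
      ((Real.sqrt (2 * π * v))⁻¹)
    simp only [Real.rpow_two] at h
    refine h.congr (ae_of_all _ fun x => ?_)
    simp only [NNReal.smul_def]
    rw [Real.coe_toNNReal _ (gaussianPDFReal_nonneg 0 v x), gaussianPDFReal]
    rw [smul_eq_mul, show Real.exp (-(x-0)^2/(2*(v:ℝ))) = Real.exp (-(2*(v:ℝ))⁻¹ * x^2) by
      congr 1; ring]
    ring

lemma integral_sq_gaussianReal {v : ℝ≥0} (hv : v ≠ 0) :
    ∫ x, x ^ 2 ∂(gaussianReal 0 v) = v := by
  have hv' : (0:ℝ) < v := by positivity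
  have hb : (0:ℝ) < (2 * (v:ℝ))⁻¹ := by positivity
  rw [gaussianReal_of_var_ne_zero _ hv,
    show gaussianPDF 0 v = fun x => ((Real.toNNReal (gaussianPDFReal 0 v x) : ℝ≥0∞)) from rfl,
    integral_withDensity_eq_integral_smul ((measurable_gaussianPDFReal 0 v).real_toNNReal)]
  have heq : (fun x : ℝ => Real.toNNReal (gaussianPDFReal 0 v x) • x ^ 2)
      = fun x : ℝ => (Real.sqrt (2 * π * v))⁻¹ * (x ^ 2 * Real.exp (-(2*(v:ℝ))⁻¹ * x ^ 2)) := by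
    funext x
    simp only [NNReal.smul_def]
    rw [Real.coe_toNNReal _ (gaussianPDFReal_nonneg 0 v x), gaussianPDFReal]
    rw [smul_eq_mul, show Real.exp (-(x-0)^2/(2*(v:ℝ))) = Real.exp (-(2*(v:ℝ))⁻¹ * x^2) by
      congr 1; ring]
    ring
  rw [heq, integral_const_mul, int_sq_exp_full hb]
  set s := Real.sqrt (2 * (v:ℝ)) with hs
  have hs0 : 0 < s := Real.sqrt_pos.mpr (by positivity)
  have hs2 : s ^ 2 = 2 * (v:ℝ) := Real.sq_sqrt (by positivity)
  have ht0 : 0 < Real.sqrt π := Real.sqrt_pos.mpr Real.pi_pos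
  have h1 : Real.sqrt (2 * π * (v:ℝ)) = Real.sqrt π * s := by
    rw [hs, ← Real.sqrt_mul Real.pi_pos.le]
    ring_nf
  have h2 : ((2 * (v:ℝ))⁻¹ : ℝ) ^ (-(3:ℝ)/2) = s ^ 3 := by
    rw [show (-(3:ℝ)/2) = -((3:ℝ)/2) by norm_num, Real.rpow_neg (by positivity),
      Real.inv_rpow (by positivity), inv_inv, ← hs2, ← Real.rpow_natCast s 2,
      ← Real.rpow_mul hs0.le,
      show ((2:ℕ):ℝ) * ((3:ℝ)/2) = ((3:ℕ):ℝ) by norm_num, Real.rpow_natCast]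
  have h3 : s ^ 3 = (2*(v:ℝ)) * s := by rw [← hs2]; ring
  rw [h1, h2, h3]
  field_simp

/-- The parabola approximation of Brownian motion on `[0, δ]` with coefficients `b` and `i`:
`β(u) = b·(u/δ) + √6·i·(u/δ)·((u/δ) − 1)`. -/
def parabola (δ b i u : ℝ) : ℝ := b * (u / δ) + Real.sqrt 6 * i * (u / δ) * (u / δ - 1)

lemma deriv_parabola {δ : ℝ} (hδ : δ ≠ 0) (b i u : ℝ) :
    deriv (parabola δ b i) u
      = (b/δ - Real.sqrt 6 * i/δ) + (2 * Real.sqrt 6 * i/δ^2) * u := by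
  have h : parabola δ b i
      = fun u => (b/δ - Real.sqrt 6 * i/δ) * u + (Real.sqrt 6 * i/δ^2) * u^2 := by
    funext u; unfold parabola; field_simp; ring
  rw [h]
  have h2 := (((hasDerivAt_id u).const_mul (b/δ - Real.sqrt 6 * i/δ)).add
      ((hasDerivAt_pow 2 u).const_mul (Real.sqrt 6 * i/δ^2))).deriv
  simp only [id] at h2
  rw [show (fun u => (b/δ - Real.sqrt 6 * i/δ) * u + (Real.sqrt 6 * i/δ^2) * u^2) = ((fun y => (b/δ - Real.sqrt 6 * i/δ) * y) + fun y => (Real.sqrt 6 * i/δ^2) * y^2) from rfl, h2]; push_cast; ring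

set_option maxHeartbeats 1000000 in
/-- `L²`-expansion of the Wiener-type integral against the parabola approximation:
there is a constant `C > 0`, depending only on the uniform bound `M` on `|σ'|` over `[0, T]`,
such that for every `0 < δ ≤ T`,
`‖∫₀^δ σ(u)·β'(u) du − (δ/2)·(σ(0)·A₋ + σ(δ)·A₊)‖_{L²} ≤ C·δ^{3/2}`,
where `A₋ = β'(0)` and `A₊ = β'(δ)`. -/
theorem parabola_wiener_integral_expansion (M : ℝ) (hM : 0 ≤ M) :
    ∃ C : ℝ, 0 < C ∧
      ∀ (T : ℝ), 0 < T → ∀ σ : ℝ → ℝ, ContDiffOn ℝ 1 σ (Set.Icc 0 T) →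
      (∀ t ∈ Set.Icc (0:ℝ) T, |derivWithin σ (Set.Icc 0 T) t| ≤ M) →
      ∀ δ : ℝ, 0 < δ → δ ≤ T →
      ∀ (Ω : Type) (_ : MeasurableSpace Ω) (P : Measure Ω) (_ : IsProbabilityMeasure P)
        (Bδ Iδ : Ω → ℝ), Measurable Bδ → Measurable Iδ →
        Measure.map Bδ P = gaussianReal 0 δ.toNNReal →
        Measure.map Iδ P = gaussianReal 0 (δ / 2).toNNReal →
        IndepFun Bδ Iδ P →
        Real.sqrt (∫ ω, ((∫ u in (0:ℝ)..δ, σ u * deriv (parabola δ (Bδ ω) (Iδ ω)) u) -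
            δ / 2 * (σ 0 * deriv (parabola δ (Bδ ω) (Iδ ω)) 0 +
              σ δ * deriv (parabola δ (Bδ ω) (Iδ ω)) δ)) ^ 2 ∂P)
          ≤ C * δ ^ ((3:ℝ)/2) := by
  refine ⟨10 * (M + 1), by positivity, ?_⟩
  intro T hT σ hσ hσ' δ hδ hδT Ω mΩ P hP Bδ Iδ hBm hIm hmapB hmapI _hindep
  have hδ0 : δ ≠ 0 := hδ.ne'
  have hσc : ContinuousOn σ (Set.Icc 0 δ) :=
    hσ.continuousOn.mono (Set.Icc_subset_Icc_right hδT)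
  have huIcc : Set.uIcc (0:ℝ) δ = Set.Icc 0 δ := Set.uIcc_of_le hδ.le
  have h1 : IntervalIntegrable σ volume 0 δ := by
    apply ContinuousOn.intervalIntegrable; rwa [huIcc]
  have h2 : IntervalIntegrable (fun u => σ u * u) volume 0 δ := by
    apply ContinuousOn.intervalIntegrable; rw [huIcc]
    exact hσc.mul continuousOn_id
  -- Lipschitz-type bound
  have hlip : ∀ u ∈ Set.Icc (0:ℝ) δ, ∀ w ∈ Set.Icc (0:ℝ) δ, |σ u - σ w| ≤ M * δ := by
    intro u hu w hw
    have hsub : Set.Icc (0:ℝ) δ ⊆ Set.Icc 0 T := Set.Icc_subset_Icc_right hδT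
    have hmv := (convex_Icc (0:ℝ) T).norm_image_sub_le_of_norm_derivWithin_le
      (hσ.differentiableOn one_ne_zero) (fun x hx => hσ' x hx) (hsub hw) (hsub hu)
    rw [Real.norm_eq_abs, Real.norm_eq_abs] at hmv
    refine hmv.trans ?_
    have h3 : |u - w| ≤ δ := by
      rw [abs_le]
      constructor
      · linarith [hu.1, hw.2]
      · linarith [hu.2, hw.1]
    exact mul_le_mul_of_nonneg_left h3 hM
  -- bounds on the two error terms
  have hbE₁ : |(∫ u in (0:ℝ)..δ, σ u) - δ/2*(σ 0 + σ δ)| ≤ M*δ*δ := by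
    have heq : (∫ u in (0:ℝ)..δ, σ u) - δ/2*(σ 0 + σ δ)
        = ∫ u in (0:ℝ)..δ, (σ u - (σ 0 + σ δ)/2) := by
      rw [intervalIntegral.integral_sub h1 intervalIntegrable_const,
        intervalIntegral.integral_const, smul_eq_mul]
      ring
    rw [heq]
    have hb := intervalIntegral.norm_integral_le_of_norm_le_const
      (C := M*δ) (f := fun u => σ u - (σ 0 + σ δ)/2) (a := 0) (b := δ) ?_
    · rw [Real.norm_eq_abs] at hb
      refine hb.trans ?_
      rw [sub_zero, abs_of_pos hδ]
    · intro x hx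
      rw [Set.uIoc_of_le hδ.le] at hx
      have hx' : x ∈ Set.Icc (0:ℝ) δ := Set.Ioc_subset_Icc_self hx
      have ha := hlip x hx' 0 ⟨le_rfl, hδ.le⟩
      have hb' := hlip x hx' δ ⟨hδ.le, le_rfl⟩
      show ‖σ x - (σ 0 + σ δ)/2‖ ≤ M * δ
      rw [Real.norm_eq_abs,
        show σ x - (σ 0 + σ δ)/2 = ((σ x - σ 0) + (σ x - σ δ))/2 by ring]
      have htri := abs_add_le (σ x - σ 0) (σ x - σ δ)
      rw [abs_div, abs_two]
      linarith
  have hbE₂ : |(∫ u in (0:ℝ)..δ, σ u * u) - δ^2/2 * σ δ| ≤ M*δ*δ*δ := by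
    have heq : (∫ u in (0:ℝ)..δ, σ u * u) - δ^2/2 * σ δ
        = ∫ u in (0:ℝ)..δ, (σ u * u - σ δ * u) := by
      rw [intervalIntegral.integral_sub h2 ((intervalIntegral.intervalIntegrable_id).const_mul (σ δ)),
        intervalIntegral.integral_const_mul, integral_id]
      ring
    rw [heq]
    have hb := intervalIntegral.norm_integral_le_of_norm_le_const
      (C := M*δ*δ) (f := fun u => σ u * u - σ δ * u) (a := 0) (b := δ) ?_
    · rw [Real.norm_eq_abs] at hb
      refine hb.trans ?_
      rw [sub_zero, abs_of_pos hδ]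
    · intro x hx
      rw [Set.uIoc_of_le hδ.le] at hx
      have hx' : x ∈ Set.Icc (0:ℝ) δ := Set.Ioc_subset_Icc_self hx
      have ha := hlip x hx' δ ⟨hδ.le, le_rfl⟩
      show ‖σ x * x - σ δ * x‖ ≤ M * δ * δ
      rw [Real.norm_eq_abs, show σ x * x - σ δ * x = (σ x - σ δ) * x by ring, abs_mul]
      have hxa : |x| ≤ δ := by rw [abs_of_pos hx.1]; exact hx.2
      calc |σ x - σ δ| * |x| ≤ (M*δ) * δ :=
            mul_le_mul ha hxa (abs_nonneg _) (by positivity)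
        _ = M*δ*δ := by ring
  -- linear representation of the error
  set E₁ := (∫ u in (0:ℝ)..δ, σ u) - δ/2*(σ 0 + σ δ) with hE₁def
  set E₂ := (∫ u in (0:ℝ)..δ, σ u * u) - δ^2/2 * σ δ with hE₂def
  set c₁ := E₁/δ with hc₁def
  set c₂ := -Real.sqrt 6 * E₁/δ + 2*Real.sqrt 6*E₂/δ^2 with hc₂def
  have hXeq : ∀ ω : Ω,
      ((∫ u in (0:ℝ)..δ, σ u * deriv (parabola δ (Bδ ω) (Iδ ω)) u) -
        δ / 2 * (σ 0 * deriv (parabola δ (Bδ ω) (Iδ ω)) 0 +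
          σ δ * deriv (parabola δ (Bδ ω) (Iδ ω)) δ))
      = c₁ * Bδ ω + c₂ * Iδ ω := by
    intro ω
    have hint : ∫ u in (0:ℝ)..δ, σ u * deriv (parabola δ (Bδ ω) (Iδ ω)) u
        = (Bδ ω/δ - Real.sqrt 6 * Iδ ω/δ) * (∫ u in (0:ℝ)..δ, σ u)
          + (2 * Real.sqrt 6 * Iδ ω/δ^2) * (∫ u in (0:ℝ)..δ, σ u * u) := by
      rw [← intervalIntegral.integral_const_mul, ← intervalIntegral.integral_const_mul,
        ← intervalIntegral.integral_add (h1.const_mul _) (h2.const_mul _)]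
      apply intervalIntegral.integral_congr
      intro u hu
      simp only [deriv_parabola hδ0]
      ring
    rw [hint, deriv_parabola hδ0, deriv_parabola hδ0, hc₁def, hc₂def, hE₁def, hE₂def]
    field_simp
    ring
  -- bounds on coefficients
  have h6 : Real.sqrt 6 ≤ 3 := by
    nlinarith [Real.sq_sqrt (by norm_num : (0:ℝ) ≤ 6), Real.sqrt_nonneg 6]
  have hbc₁ : |c₁| ≤ M * δ := by
    rw [hc₁def, abs_div, abs_of_pos hδ, div_le_iff₀ hδ]
    exact hbE₁
  have hbc₂ : |c₂| ≤ 9 * M * δ := by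
    have hmul : c₂ * δ^2 = -(Real.sqrt 6 * E₁ * δ) + 2*Real.sqrt 6*E₂ := by
      rw [hc₂def]; field_simp
    have habs : |c₂| * δ^2 ≤ 9 * M * δ * δ^2 := by
      have e1 : |c₂| * δ^2 = |c₂ * δ^2| := by
        rw [abs_mul, abs_of_pos (by positivity : (0:ℝ) < δ^2)]
      rw [e1, hmul]
      calc |-(Real.sqrt 6 * E₁ * δ) + 2*Real.sqrt 6*E₂|
          ≤ |-(Real.sqrt 6 * E₁ * δ)| + |2*Real.sqrt 6*E₂| := abs_add_le _ _
        _ = Real.sqrt 6 * |E₁| * δ + 2*Real.sqrt 6*|E₂| := by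
            rw [abs_neg, abs_mul, abs_mul, abs_mul, abs_mul,
              abs_of_nonneg (Real.sqrt_nonneg 6), abs_of_pos hδ, abs_two]
        _ ≤ 3 * (M*δ*δ) * δ + 2*3*(M*δ*δ*δ) := by
            have t1 : Real.sqrt 6 * |E₁| ≤ 3 * (M*δ*δ) :=
              mul_le_mul h6 hbE₁ (abs_nonneg _) (by norm_num)
            have t2 : Real.sqrt 6 * |E₂| ≤ 3 * (M*δ*δ*δ) :=
              mul_le_mul h6 hbE₂ (abs_nonneg _) (by norm_num)
            nlinarith [hδ, abs_nonneg E₂]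
        _ = 9 * M * δ * δ^2 := by ring
    exact le_of_mul_le_mul_right habs (by positivity : (0:ℝ) < δ^2)
  clear_value E₁ E₂ c₁ c₂
  -- second moments
  have hvB : δ.toNNReal ≠ 0 := by
    simp only [ne_eq, Real.toNNReal_eq_zero, not_le]
    exact hδ
  have hvI : (δ/2).toNNReal ≠ 0 := by
    simp only [ne_eq, Real.toNNReal_eq_zero, not_le]
    positivity
  have hIntB : Integrable (fun ω => (Bδ ω)^2) P := by
    have h := integrable_sq_gaussianReal δ.toNNReal
    rw [← hmapB] at h
    have := (integrable_map_measure
      ((measurable_id.pow_const 2).aestronglyMeasurable) hBm.aemeasurable).mp h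
    exact this
  have hIntI : Integrable (fun ω => (Iδ ω)^2) P := by
    have h := integrable_sq_gaussianReal (δ/2).toNNReal
    rw [← hmapI] at h
    have := (integrable_map_measure
      ((measurable_id.pow_const 2).aestronglyMeasurable) hIm.aemeasurable).mp h
    exact this
  have hmomB : ∫ ω, (Bδ ω)^2 ∂P = δ := by
    have h : ∫ x, x^2 ∂(Measure.map Bδ P) = ∫ ω, (Bδ ω)^2 ∂P :=
      integral_map hBm.aemeasurable ((measurable_id.pow_const 2).aestronglyMeasurable)
    rw [hmapB, integral_sq_gaussianReal hvB] at h
    rw [← h, Real.coe_toNNReal _ hδ.le]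
  have hmomI : ∫ ω, (Iδ ω)^2 ∂P = δ/2 := by
    have h : ∫ x, x^2 ∂(Measure.map Iδ P) = ∫ ω, (Iδ ω)^2 ∂P :=
      integral_map hIm.aemeasurable ((measurable_id.pow_const 2).aestronglyMeasurable)
    rw [hmapI, integral_sq_gaussianReal hvI] at h
    rw [← h, Real.coe_toNNReal _ (by positivity : (0:ℝ) ≤ δ/2)]
  -- integral bound
  have hptw : ∀ ω, (c₁*Bδ ω + c₂*Iδ ω)^2 ≤ 2*c₁^2*(Bδ ω)^2 + 2*c₂^2*(Iδ ω)^2 :=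
    fun ω => by nlinarith [sq_nonneg (c₁*Bδ ω - c₂*Iδ ω)]
  have hRHSint : Integrable (fun ω => 2*c₁^2*(Bδ ω)^2 + 2*c₂^2*(Iδ ω)^2) P :=
    (hIntB.const_mul _).add (hIntI.const_mul _)
  have hXint : Integrable (fun ω => (c₁*Bδ ω + c₂*Iδ ω)^2) P := by
    refine hRHSint.mono' ?_ (ae_of_all _ fun ω => ?_)
    · exact (((hBm.const_mul c₁).add (hIm.const_mul c₂)).pow_const 2).aestronglyMeasurable
    · rw [Real.norm_eq_abs, abs_of_nonneg (sq_nonneg _)]; exact hptw ω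
  have hint_le : ∫ ω, (c₁*Bδ ω + c₂*Iδ ω)^2 ∂P ≤ 2*c₁^2*δ + 2*c₂^2*(δ/2) := by
    calc ∫ ω, (c₁*Bδ ω + c₂*Iδ ω)^2 ∂P
        ≤ ∫ ω, (2*c₁^2*(Bδ ω)^2 + 2*c₂^2*(Iδ ω)^2) ∂P :=
          integral_mono hXint hRHSint hptw
      _ = 2*c₁^2*δ + 2*c₂^2*(δ/2) := by
          rw [integral_add (hIntB.const_mul _) (hIntI.const_mul _),
            integral_const_mul, integral_const_mul, hmomB, hmomI]
  -- rewrite the target integral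
  have hIeq : (∫ ω, ((∫ u in (0:ℝ)..δ, σ u * deriv (parabola δ (Bδ ω) (Iδ ω)) u) -
        δ / 2 * (σ 0 * deriv (parabola δ (Bδ ω) (Iδ ω)) 0 +
          σ δ * deriv (parabola δ (Bδ ω) (Iδ ω)) δ)) ^ 2 ∂P)
      = ∫ ω, (c₁*Bδ ω + c₂*Iδ ω)^2 ∂P :=
    integral_congr_ae (ae_of_all _ fun ω => by simp only [hXeq])
  rw [hIeq]
  -- final numeric estimate
  have hδ32 : (δ^((3:ℝ)/2))^2 = δ^3 := by
    rw [← Real.rpow_natCast (δ^((3:ℝ)/2)) 2, ← Real.rpow_mul hδ.le,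
      ← Real.rpow_natCast δ 3]
    norm_num
  have hsq1 : c₁^2 ≤ (M*δ)^2 := by
    rw [← sq_abs c₁]
    exact pow_le_pow_left₀ (abs_nonneg _) hbc₁ 2
  have hsq2 : c₂^2 ≤ (9*M*δ)^2 := by
    rw [← sq_abs c₂]
    exact pow_le_pow_left₀ (abs_nonneg _) hbc₂ 2
  have hfinal : ∫ ω, (c₁*Bδ ω + c₂*Iδ ω)^2 ∂P ≤ (10*(M+1)*δ^((3:ℝ)/2))^2 := by
    have hrhs : (10*(M+1)*δ^((3:ℝ)/2))^2 = 100*(M+1)^2*δ^3 := by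
      rw [mul_pow, mul_pow, hδ32]; norm_num
    rw [hrhs]
    refine hint_le.trans ?_
    nlinarith [mul_le_mul_of_nonneg_right hsq1 hδ.le,
      mul_le_mul_of_nonneg_right hsq2 hδ.le,
      mul_nonneg (mul_nonneg hM hM) (pow_pos hδ 3).le,
      mul_nonneg hM (pow_pos hδ 3).le, (pow_pos hδ 3).le]
  calc Real.sqrt (∫ ω, (c₁*Bδ ω + c₂*Iδ ω)^2 ∂P)
      ≤ Real.sqrt ((10*(M+1)*δ^((3:ℝ)/2))^2) := Real.sqrt_le_sqrt hfinal
    _ = 10*(M+1)*δ^((3:ℝ)/2) := Real.sqrt_sq (by positivity)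
end
end

section
/- For every δ > 0, the Kalman gain K(δ) = Q(δ)·H₁ᵀ·(H₁·Q(δ)·H₁ᵀ)⁻¹ ∈ ℝ² built from predictive covariance Q(δ), observation row H₁, and zero measurement noise has second component exactly equal to 1, i.e. K(δ)₁ = 1; moreover there exists C > 0, depending only on θ, such that |K(δ)₀ − δ/2| ≤ C·δ³ for all 0 < δ ≤ 1. -/
open Matrix MeasureTheory Real

set_option maxHeartbeats 1000000

noncomputable section

/-- Drift matrix `F = [[0, 1], [0, −θ]]` of the integrated Ornstein–Uhlenbeck prior. -/
def Fmat (θ : ℝ) : Matrix (Fin 2) (Fin 2) ℝ := !![0, 1; 0, -θ]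

/-- Diffusion column vector `L = (0, η)ᵀ`. -/
def Lmat (η : ℝ) : Matrix (Fin 2) (Fin 1) ℝ := !![0; η]

/-- Noise covariance `Q(δ) = ∫₀^δ exp(sF)·L·Lᵀ·exp(sFᵀ) ds` (entrywise Bochner integral). -/
def Qmat (θ η δ : ℝ) : Matrix (Fin 2) (Fin 2) ℝ :=
  Matrix.of fun i j => ∫ s in (0:ℝ)..δ,
    (NormedSpace.exp (s • Fmat θ) * (Lmat η * (Lmat η)ᵀ) *
      NormedSpace.exp (s • (Fmat θ)ᵀ)) i j


/-- Observation row vector `H₁ = (0, 1)`. -/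
def H1row : Matrix (Fin 1) (Fin 2) ℝ := !![0, 1]

/-- Kalman gain `K(δ) = Q(δ)·H₁ᵀ·(H₁·Q(δ)·H₁ᵀ)⁻¹` with zero measurement noise. -/
def Kgain (θ η δ : ℝ) : Matrix (Fin 2) (Fin 1) ℝ :=
  Qmat θ η δ * H1rowᵀ * (H1row * Qmat θ η δ * H1rowᵀ)⁻¹

/-! ### Auxiliary development -/

attribute [local instance] Matrix.linftyOpNormedAddCommGroup Matrix.linftyOpSemiNormedRing
  Matrix.linftyOpNormedRing Matrix.linftyOpNormedAlgebra

/-- `Gint θ s = ∫₀^s e^{-θu} du`. -/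
def Gint (θ s : ℝ) : ℝ := ∫ u in (0:ℝ)..s, Real.exp (-(θ*u))

lemma contExp (θ : ℝ) : Continuous (fun u : ℝ => Real.exp (-(θ*u))) := by continuity

lemma hG (θ s : ℝ) : HasDerivAt (Gint θ) (Real.exp (-(θ*s))) s :=
  ((contExp θ).integral_hasStrictDerivAt 0 s).hasDerivAt

lemma contG (θ : ℝ) : Continuous (Gint θ) :=
  continuous_iff_continuousAt.2 fun s => (hG θ s).continuousAt

lemma hexpAt (θ s : ℝ) : HasDerivAt (fun s : ℝ => Real.exp (-(θ*s))) (-θ * Real.exp (-(θ*s))) s := by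
  have := ((hasDerivAt_id s).const_mul (-θ)).exp
  simpa [mul_comm, neg_mul] using this

lemma theta_mul_G (θ s : ℝ) : θ * Gint θ s = 1 - Real.exp (-(θ*s)) := by
  have h : ∫ u in (0:ℝ)..s, (-θ * Real.exp (-(θ*u))) = Real.exp (-(θ*s)) - Real.exp (-(θ*0)) :=
    intervalIntegral.integral_eq_sub_of_hasDerivAt (fun u _ => hexpAt θ u)
      ((continuous_const.mul (contExp θ)).intervalIntegrable 0 s)
  have h2 : ∫ u in (0:ℝ)..s, (-θ * Real.exp (-(θ*u))) = -θ * Gint θ s := by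
    rw [intervalIntegral.integral_const_mul]; rfl
  rw [h2] at h
  simp at h
  linarith

/-- Closed form of `exp (s • F)`. -/
def Emat (θ s : ℝ) : Matrix (Fin 2) (Fin 2) ℝ := !![1, Gint θ s; 0, Real.exp (-(θ*s))]

lemma hE (θ s : ℝ) : HasDerivAt (fun s => Emat θ s) (Emat θ s * Fmat θ) s := by
  have heq : (fun s => Emat θ s) = fun s =>
      (!![1,0;0,0] : Matrix (Fin 2) (Fin 2) ℝ) + Gint θ s • (!![0,1;0,0] : Matrix (Fin 2) (Fin 2) ℝ)
        + Real.exp (-(θ*s)) • (!![0,0;0,1] : Matrix (Fin 2) (Fin 2) ℝ) := by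
    funext s; ext i j; fin_cases i <;> fin_cases j <;> simp [Emat]
  rw [heq]
  have h := (((hasDerivAt_const s (!![1,0;0,0] : Matrix (Fin 2) (Fin 2) ℝ)).add
    ((hG θ s).smul_const (!![0,1;0,0] : Matrix (Fin 2) (Fin 2) ℝ))).add
    ((hexpAt θ s).smul_const (!![0,0;0,1] : Matrix (Fin 2) (Fin 2) ℝ)))
  refine h.congr_deriv ?_
  ext i j; fin_cases i <;> fin_cases j <;>
    simp [Emat, Fmat, Matrix.mul_apply, Fin.sum_univ_succ] <;> nlinarith [theta_mul_G θ s]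

lemma exp_smul_F (θ s : ℝ) : NormedSpace.exp (s • Fmat θ) = Emat θ s := by
  have hM : ∀ t : ℝ, HasDerivAt (fun s => Emat θ s * NormedSpace.exp (-(s • Fmat θ)))
      (0 : Matrix (Fin 2) (Fin 2) ℝ) t := by
    intro t
    have h1 : HasDerivAt (fun s : ℝ => NormedSpace.exp (-(s • Fmat θ)))
        ((-1 : ℝ) • (Fmat θ * NormedSpace.exp (-(t • Fmat θ)))) t := by
      have := (hasDerivAt_exp_smul_const' (𝕂 := ℝ) (Fmat θ) (-t)).scomp t (hasDerivAt_neg t)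
      simp only [Function.comp_def, neg_smul, one_smul] at this
      rw [neg_smul, one_smul]
      exact this
    have h2 := (hE θ t).mul h1
    refine h2.congr_deriv ?_
    simp [mul_assoc]
  have hconst : ∀ t : ℝ, (fun s => Emat θ s * NormedSpace.exp (-(s • Fmat θ))) t
      = (fun s => Emat θ s * NormedSpace.exp (-(s • Fmat θ))) 0 :=
    fun t => is_const_of_deriv_eq_zero (fun x => (hM x).differentiableAt)
      (fun x => (hM x).deriv) t 0
  have h0 : Emat θ 0 = 1 := by
    ext i j; fin_cases i <;> fin_cases j <;> simp [Emat, Gint, Matrix.one_apply]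
  have hs := hconst s
  simp only [zero_smul, neg_zero, NormedSpace.exp_zero, h0, one_mul, mul_one] at hs
  have hinv : NormedSpace.exp (-(s • Fmat θ)) * NormedSpace.exp (s • Fmat θ) = 1 := by
    refine (NormedSpace.exp_add_of_commute (Commute.neg_left (Commute.refl (s • Fmat θ)))).symm.trans ?_
    simp
  calc NormedSpace.exp (s • Fmat θ)
      = (Emat θ s * NormedSpace.exp (-(s • Fmat θ))) * NormedSpace.exp (s • Fmat θ) := by
        rw [hs, one_mul]
    _ = Emat θ s * (NormedSpace.exp (-(s • Fmat θ)) * NormedSpace.exp (s • Fmat θ)) := by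
        rw [mul_assoc]
    _ = Emat θ s := by rw [hinv, mul_one]

lemma integrand_eq (θ η s : ℝ) :
    (NormedSpace.exp (s • Fmat θ) * (Lmat η * (Lmat η)ᵀ) * NormedSpace.exp (s • (Fmat θ)ᵀ))
      = η^2 • !![Gint θ s ^ 2, Gint θ s * Real.exp (-(θ*s));
                 Gint θ s * Real.exp (-(θ*s)), Real.exp (-(θ*s)) ^ 2] := by
  rw [← Matrix.transpose_smul, Matrix.exp_transpose, exp_smul_F]
  ext i j; fin_cases i <;> fin_cases j <;>
    simp [Emat, Lmat, Matrix.mul_apply, Fin.sum_univ_succ, Matrix.vecHead, Matrix.vecTail,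
      Matrix.transpose_apply, Matrix.cons_val_zero, Matrix.cons_val_one, Matrix.vecMul, dotProduct] <;> ring

lemma Q11 (θ η δ : ℝ) : Qmat θ η δ 1 1 = η^2 * Gint (2*θ) δ := by
  have h : ∀ s : ℝ,
      (NormedSpace.exp (s • Fmat θ) * (Lmat η * (Lmat η)ᵀ) * NormedSpace.exp (s • (Fmat θ)ᵀ)) 1 1
      = η^2 * Real.exp (-(2*θ*s)) := by
    intro s; rw [integrand_eq]
    have : Real.exp (-(θ*s)) ^ 2 = Real.exp (-(2*θ*s)) := by
      rw [pow_two, ← Real.exp_add]; ring_nf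
    simp [this]
  show (∫ s in (0:ℝ)..δ, _) = _
  simp_rw [h]
  rw [intervalIntegral.integral_const_mul]; rfl

lemma Q01 (θ η δ : ℝ) : Qmat θ η δ 0 1 = η^2 * (Gint θ δ ^ 2 / 2) := by
  have hpt : ∀ s : ℝ,
      (NormedSpace.exp (s • Fmat θ) * (Lmat η * (Lmat η)ᵀ) * NormedSpace.exp (s • (Fmat θ)ᵀ)) 0 1
      = η^2 * (Gint θ s * Real.exp (-(θ*s))) := by
    intro s; rw [integrand_eq]; simp
  have hderiv : ∀ s ∈ Set.uIcc (0:ℝ) δ,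
      HasDerivAt (fun s => Gint θ s * Gint θ s / 2) (Gint θ s * Real.exp (-(θ*s))) s := by
    intro s _
    have := ((hG θ s).mul (hG θ s)).div_const 2
    refine this.congr_deriv ?_; ring
  have hint : IntervalIntegrable (fun s => Gint θ s * Real.exp (-(θ*s))) volume 0 δ :=
    ((contG θ).mul (contExp θ)).intervalIntegrable 0 δ
  have h := intervalIntegral.integral_eq_sub_of_hasDerivAt hderiv hint
  have hG0 : Gint θ 0 = 0 := by simp [Gint]
  show (∫ s in (0:ℝ)..δ, _) = _
  simp_rw [hpt]
  rw [intervalIntegral.integral_const_mul, h, hG0]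
  ring

lemma Kgain_apply (θ η δ : ℝ) (i : Fin 2) :
    Kgain θ η δ i 0 = Qmat θ η δ i 1 * (Qmat θ η δ 1 1)⁻¹ := by
  have h1 : H1row * Qmat θ η δ * H1rowᵀ = !![Qmat θ η δ 1 1] := by
    ext a b; fin_cases a <;> fin_cases b <;>
      simp [H1row, Matrix.mul_apply, Matrix.vecMul, dotProduct, Fin.sum_univ_succ]
  have h2 : (!![Qmat θ η δ 1 1] : Matrix (Fin 1) (Fin 1) ℝ)⁻¹ = !![(Qmat θ η δ 1 1)⁻¹] := by
    rw [Matrix.inv_def]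
    ext a b; fin_cases a <;> fin_cases b <;>
      simp [Matrix.adjugate_fin_one, Matrix.det_fin_one, Ring.inverse_eq_inv']
  unfold Kgain
  rw [h1, h2]
  fin_cases i <;> simp [H1row, Matrix.mul_apply, Fin.sum_univ_succ]

/-! ### Elementary estimates -/

lemma exp_neg_le (t : ℝ) (ht : 0 ≤ t) : Real.exp (-t) ≤ 1 - t + t^2 := by
  have h1 : 1 + t ≤ Real.exp t := by linarith [Real.add_one_le_exp t]
  have hp : 0 < Real.exp t := Real.exp_pos t
  rw [Real.exp_neg]
  have hinv : (Real.exp t)⁻¹ * Real.exp t = 1 := inv_mul_cancel₀ (ne_of_gt hp)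
  have hq : (0:ℝ) < 1 - t + t^2 := by nlinarith [sq_nonneg (t - 1/2)]
  rw [inv_le_iff_one_le_mul₀ hp]
  nlinarith [sq_nonneg t, mul_nonneg (sq_nonneg t) ht]

lemma G_lower (θ δ : ℝ) (hθ : 0 ≤ θ) (hδ : 0 ≤ δ) : δ - θ*δ^2/2 ≤ Gint θ δ := by
  have h : ∫ u in (0:ℝ)..δ, (1 - θ*u) ≤ Gint θ δ := by
    apply intervalIntegral.integral_mono_on hδ
      ((by continuity : Continuous fun u : ℝ => 1 - θ*u).intervalIntegrable 0 δ)
      ((contExp θ).intervalIntegrable 0 δ)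
    intro u hu
    have := Real.add_one_le_exp (-(θ*u))
    linarith
  have h2 : ∫ u in (0:ℝ)..δ, (1 - θ*u) = δ - θ*δ^2/2 := by
    rw [intervalIntegral.integral_sub (Continuous.intervalIntegrable (by continuity) 0 δ)
        (Continuous.intervalIntegrable (by continuity) 0 δ),
      intervalIntegral.integral_const, intervalIntegral.integral_const_mul, integral_id]
    simp; ring
  linarith

lemma G_upper (θ δ : ℝ) (hθ : 0 ≤ θ) (hδ : 0 ≤ δ) :
    Gint θ δ ≤ δ - θ*δ^2/2 + θ^2*δ^3/3 := by
  have h : Gint θ δ ≤ ∫ u in (0:ℝ)..δ, (1 - θ*u + θ^2*u^2) := by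
    apply intervalIntegral.integral_mono_on hδ
      ((contExp θ).intervalIntegrable 0 δ)
      ((by continuity : Continuous fun u : ℝ => 1 - θ*u + θ^2*u^2).intervalIntegrable 0 δ)
    intro u hu
    have := exp_neg_le (θ*u) (mul_nonneg hθ hu.1)
    calc Real.exp (-(θ*u)) ≤ 1 - θ*u + (θ*u)^2 := this
      _ = 1 - θ*u + θ^2*u^2 := by ring
  have h2 : ∫ u in (0:ℝ)..δ, (1 - θ*u + θ^2*u^2) = δ - θ*δ^2/2 + θ^2*δ^3/3 := by
    rw [intervalIntegral.integral_add (Continuous.intervalIntegrable (by continuity) 0 δ)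
        (Continuous.intervalIntegrable (by continuity) 0 δ),
      intervalIntegral.integral_sub (Continuous.intervalIntegrable (by continuity) 0 δ)
        (Continuous.intervalIntegrable (by continuity) 0 δ),
      intervalIntegral.integral_const, intervalIntegral.integral_const_mul,
      intervalIntegral.integral_const_mul, integral_id, integral_pow]
    simp; ring
  linarith

lemma G_lower_exp (θ δ : ℝ) (hθ : 0 ≤ θ) (hδ : 0 ≤ δ) (hδ1 : δ ≤ 1) :
    δ * Real.exp (-θ) ≤ Gint θ δ := by
  have h : ∫ u in (0:ℝ)..δ, Real.exp (-θ) ≤ Gint θ δ := by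
    apply intervalIntegral.integral_mono_on hδ
      (intervalIntegrable_const) ((contExp θ).intervalIntegrable 0 δ)
    intro u hu
    apply Real.exp_le_exp.2
    nlinarith [hu.1, hu.2, mul_nonneg hθ hu.1]
  simpa using h

lemma G_pos (θ δ : ℝ) (hδ : 0 < δ) : 0 < Gint θ δ := by
  apply intervalIntegral.intervalIntegral_pos_of_pos_on
    ((contExp θ).intervalIntegrable 0 δ) _ hδ
  intro u _; exact Real.exp_pos _

lemma key_est (θ : ℝ) (hθ : 0 ≤ θ) : ∃ C : ℝ, 0 < C ∧ ∀ δ : ℝ, 0 < δ → δ ≤ 1 →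
    |Gint θ δ ^ 2 / 2 * (Gint (2*θ) δ)⁻¹ - δ/2| ≤ C * δ^3 := by
  set M : ℝ := 2*θ^2 + θ^4 + 1 with hM
  have hMpos : 0 < M := by positivity
  refine ⟨M * Real.exp (2*θ), by positivity, fun δ hδ hδ1 => ?_⟩
  set G := Gint θ δ with hGdef
  set G2 := Gint (2*θ) δ with hG2def
  have h2θ : 0 ≤ 2*θ := by linarith
  have hr1 : δ - θ*δ^2/2 ≤ G := G_lower θ δ hθ hδ.le
  have hr2 : G ≤ δ - θ*δ^2/2 + θ^2*δ^3/3 := G_upper θ δ hθ hδ.le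
  have hs1 : δ - θ*δ^2 ≤ G2 := by
    have := G_lower (2*θ) δ h2θ hδ.le; linarith
  have hs2 : G2 ≤ δ - θ*δ^2 + 4*θ^2*δ^3/3 := by
    have := G_upper (2*θ) δ h2θ hδ.le; nlinarith
  have hden : δ * Real.exp (-(2*θ)) ≤ G2 := G_lower_exp (2*θ) δ h2θ hδ.le hδ1
  have hGpos : 0 < G := G_pos θ δ hδ
  have hG2pos : 0 < G2 := G_pos (2*θ) δ hδ
  have hδ4 : 0 < δ^4 := by positivity
  have h64 : δ^6 ≤ δ^4 := pow_le_pow_of_le_one hδ.le hδ1 (by norm_num)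
  have h54 : δ^5 ≤ δ^4 := pow_le_pow_of_le_one hδ.le hδ1 (by norm_num)
  have hnum_up : G^2 - δ*G2 ≤ M * δ^4 := by
    have hsqup : G^2 ≤ (δ - θ*δ^2/2 + θ^2*δ^3/3)^2 := pow_le_pow_left₀ hGpos.le hr2 2
    have hmul : δ*(δ - θ*δ^2) ≤ δ*G2 := mul_le_mul_of_nonneg_left hs1 hδ.le
    nlinarith [mul_nonneg (pow_nonneg hθ 3) (pow_nonneg hδ.le 5),
      mul_nonneg (mul_nonneg (sq_nonneg θ) (sq_nonneg θ)) (sub_nonneg.2 h64),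
      mul_nonneg (sq_nonneg θ) (sub_nonneg.2 h54), pow_nonneg hδ.le 4]
  have hsq : G^2 ≥ δ^2 - θ*δ^3 := by
    rcases le_or_gt 0 (δ - θ*δ^2/2) with h|h
    · nlinarith [mul_self_le_mul_self h hr1]
    · nlinarith [sq_nonneg G, mul_pos hδ hδ]
  have hnum_lo : -(M * δ^4) ≤ G^2 - δ*G2 := by
    have hmul : δ*G2 ≤ δ*(δ - θ*δ^2 + 4*θ^2*δ^3/3) := mul_le_mul_of_nonneg_left hs2 hδ.le
    nlinarith [mul_nonneg (sq_nonneg θ) hδ4.le, mul_nonneg (mul_nonneg (sq_nonneg θ) (sq_nonneg θ)) hδ4.le, hδ4.le]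
  have habs : |G^2 - δ*G2| ≤ M * δ^4 := abs_le.2 ⟨hnum_lo, hnum_up⟩
  have heq : G^2/2 * G2⁻¹ - δ/2 = (G^2 - δ*G2)/(2*G2) := by
    field_simp
  rw [heq, abs_div, abs_of_pos (by linarith : (0:ℝ) < 2*G2)]
  have hd : 0 < 2 * (δ * Real.exp (-(2*θ))) := by positivity
  calc |G^2 - δ*G2| / (2*G2) ≤ (M * δ^4) / (2 * (δ * Real.exp (-(2*θ)))) :=
        div_le_div₀ (by positivity) habs hd (by linarith)
    _ ≤ M * Real.exp (2*θ) * δ^3 := by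
        rw [Real.exp_neg, div_le_iff₀ (by positivity)]
        have h' : M * Real.exp (2*θ) * δ^3 * (2*(δ * (Real.exp (2*θ))⁻¹)) = 2*(M*δ^4) := by
          field_simp
        rw [h']
        nlinarith [mul_pos hMpos hδ4]

/-- The Kalman gain of the one-step EKF0 with IOUP prior has second component exactly `1`,
and first component `δ/2 + O(δ³)` with a constant depending only on `θ`. -/
theorem ekf0_kalman_gain (θ : ℝ) (hθ : 0 ≤ θ) :
    (∀ η : ℝ, 0 < η → ∀ δ : ℝ, 0 < δ → Kgain θ η δ 1 0 = 1) ∧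
    ∃ C : ℝ, 0 < C ∧ ∀ η : ℝ, 0 < η → ∀ δ : ℝ, 0 < δ → δ ≤ 1 →
      |Kgain θ η δ 0 0 - δ / 2| ≤ C * δ ^ 3 := by
  constructor
  · intro η hη δ hδ
    rw [Kgain_apply, Q11]
    exact mul_inv_cancel₀ (ne_of_gt (mul_pos (pow_pos hη 2) (G_pos (2*θ) δ hδ)))
  · obtain ⟨C, hC, hest⟩ := key_est θ hθ
    refine ⟨C, hC, fun η hη δ hδ hδ1 => ?_⟩
    rw [Kgain_apply, Q01, Q11, mul_inv,
      show η^2 * (Gint θ δ ^ 2 / 2) * ((η^2)⁻¹ * (Gint (2*θ) δ)⁻¹)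
        = (η^2*(η^2)⁻¹) * (Gint θ δ ^ 2 / 2 * (Gint (2*θ) δ)⁻¹) from by ring,
      mul_inv_cancel₀ (by positivity : (η:ℝ)^2 ≠ 0), one_mul]
    exact hest δ hδ hδ1
end
end

section
/- There exists a constant C > 0, depending only on θ, η and T, such that for all 0 < δ ≤ 1 and all integers 1 ≤ n ≤ T/δ, the EKF0 variance recursion of the Gaussian mixture SDE filter satisfies |p_n − n·η²·δ³/12| ≤ C·n·δ⁵. -/
open Matrix MeasureTheory Real
open scoped Nat

noncomputable section

/-- Transition matrix `A(δ) = exp(δF)`. -/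
def Amat (θ δ : ℝ) : Matrix (Fin 2) (Fin 2) ℝ := NormedSpace.exp (δ • Fmat θ)

/-- Variance recursion of the Gaussian mixture SDE filter (Algorithm 3, EKF0, zero
measurement noise): `p₀ = 0` and `p_{k+1} = ((I₂ − K_k·H₁)·P⁻_k)₀,₀`, where
`P⁻_k = A(δ)·diag(p_k, 0)·A(δ)ᵀ + Q(δ)` and `K_k = P⁻_k·H₁ᵀ·(H₁·P⁻_k·H₁ᵀ)⁻¹`. -/
def pvar (θ η δ : ℝ) : ℕ → ℝ
  | 0 => 0
  | k + 1 =>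
    let Pm : Matrix (Fin 2) (Fin 2) ℝ :=
      Amat θ δ * Matrix.diagonal ![pvar θ η δ k, 0] * (Amat θ δ)ᵀ + Qmat θ η δ
    (((1 : Matrix (Fin 2) (Fin 2) ℝ) - Pm * H1rowᵀ * (H1row * Pm * H1rowᵀ)⁻¹ * H1row) * Pm) 0 0

def fOU (θ s : ℝ) : ℝ := ∫ u in (0:ℝ)..s, Real.exp (-(θ * u))

lemma fOU_ne (θ s : ℝ) (hθ : θ ≠ 0) : fOU θ s = (1 - Real.exp (-(θ * s))) / θ := by
  have : ∀ u : ℝ, Real.exp (-(θ * u)) = Real.exp ((-θ) * u) := by intro u; ring_nf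
  rw [fOU]
  simp_rw [this]
  rw [intervalIntegral.integral_comp_mul_left (fun x => Real.exp x) (neg_ne_zero.mpr hθ)]
  simp [integral_exp]
  field_simp
  ring_nf

lemma fOU_zero (s : ℝ) : fOU 0 s = s := by simp [fOU]

lemma Fmat_sq (θ : ℝ) : Fmat θ * Fmat θ = (-θ) • Fmat θ := by
  ext i j
  fin_cases i <;> fin_cases j <;> simp [Fmat, Matrix.mul_apply, Fin.sum_univ_succ]

lemma smulF_pow (θ s : ℝ) : ∀ n : ℕ, (s • Fmat θ) ^ (n+1) = (s^(n+1) * (-θ)^n) • Fmat θ := by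
  intro n
  induction n with
  | zero => simp
  | succ n ih =>
    rw [pow_succ, ih, smul_mul_assoc, mul_smul_comm, Fmat_sq, smul_smul, smul_smul]
    congr 1
    ring

lemma tsum_shift_exp (x : ℝ) : ∑' n : ℕ, x^(n+1)/(n+1)! = Real.exp x - 1 := by
  have h := Real.summable_pow_div_factorial x
  have hexp : Real.exp x = ∑' n : ℕ, x^n / n ! := by
    rw [Real.exp_eq_exp_ℝ, NormedSpace.exp_eq_tsum_div]
  rw [hexp, Summable.tsum_eq_zero_add h]
  simp

lemma summable_b (θ s : ℝ) : Summable (fun n : ℕ => (((n+1)! : ℝ))⁻¹ * (s^(n+1) * (-θ)^n)) := by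
  apply Summable.of_norm_bounded
    ((Real.summable_pow_div_factorial (|s| * |θ|)).mul_left |s|)
  intro n
  rw [norm_mul, norm_inv, norm_mul, norm_pow, norm_pow]
  simp only [Real.norm_eq_abs, abs_neg]
  rw [abs_of_nonneg (by positivity : (0:ℝ) ≤ ((n+1)! : ℝ))]
  rw [mul_pow, pow_succ]
  rw [div_eq_inv_mul]
  have h1 : ((n ! : ℝ))⁻¹ ≥ (((n+1)! : ℝ))⁻¹ := by
    apply inv_anti₀ (by positivity)
    exact_mod_cast Nat.factorial_le (Nat.le_succ n)
  calc (((n+1)! : ℝ))⁻¹ * (|s|^n * |s| * |θ|^n) ≤ ((n ! : ℝ))⁻¹ * (|s|^n * |s| * |θ|^n) := by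
        apply mul_le_mul_of_nonneg_right h1 (by positivity)
    _ = |s| * ((n ! : ℝ))⁻¹ * (|s|^n * |θ|^n) := by ring
    _ = |s| * (((n ! : ℝ))⁻¹ * (|s|^n * |θ|^n)) := by ring
  
lemma exp_smul_Fmat (θ s : ℝ) :
    NormedSpace.exp (s • Fmat θ) = 1 + fOU θ s • Fmat θ := by
  set b : ℕ → ℝ := fun n => (((n+1)! : ℝ))⁻¹ * (s^(n+1) * (-θ)^n) with hb
  have hbs := summable_b θ s
  have hshift : (fun n : ℕ => ((((n+1) : ℕ)! : ℝ))⁻¹ • (s • Fmat θ) ^ (n+1)) =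
      fun n => b n • Fmat θ := by
    funext n
    rw [smulF_pow, smul_smul]
  have hsum : Summable (fun n : ℕ => (((n : ℕ)! : ℝ))⁻¹ • (s • Fmat θ) ^ n) := by
    apply (summable_nat_add_iff 1).mp
    rw [show (fun n : ℕ => ((((n+1) : ℕ)! : ℝ))⁻¹ • (s • Fmat θ) ^ (n+1)) = fun n => b n • Fmat θ from hshift]
    exact hbs.smul_const _
  rw [NormedSpace.exp_eq_tsum (𝕂 := ℝ)]
  show (∑' n : ℕ, ((n ! : ℝ))⁻¹ • (s • Fmat θ)^n) = _
  rw [Summable.tsum_eq_zero_add hsum]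
  simp only [Nat.factorial_zero, Nat.cast_one, inv_one, pow_zero, one_smul]
  rw [hshift, Summable.tsum_smul_const hbs]
  congr 2
  -- ∑' b = fOU θ s
  by_cases hθ : θ = 0
  · subst hθ
    rw [fOU_zero]
    rw [tsum_eq_single 0 (fun n hn => by simp [hb, zero_pow hn])]
    simp [hb]
  · rw [fOU_ne θ s hθ]
    have h2 : (fun n : ℕ => (((n+1)! : ℝ))⁻¹ * (s^(n+1) * (-θ)^n)) =
        fun n : ℕ => (-θ)⁻¹ * (((-θ)*s)^(n+1)/(n+1)!) := by
      funext n
      field_simp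
      ring
    rw [h2, tsum_mul_left, tsum_shift_exp]
    rw [show (-θ) * s = -(θ * s) by ring]
    field_simp
    ring_nf

lemma theta_mul_fOU (θ s : ℝ) : θ * fOU θ s = 1 - Real.exp (-(θ * s)) := by
  by_cases hθ : θ = 0
  · subst hθ; simp
  · rw [fOU_ne θ s hθ]; field_simp

lemma exp_Fmat_explicit (θ s : ℝ) :
    NormedSpace.exp (s • Fmat θ) = !![1, fOU θ s; 0, Real.exp (-(θ * s))] := by
  rw [exp_smul_Fmat]
  have h := theta_mul_fOU θ s
  ext i j
  fin_cases i <;> fin_cases j <;>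
    simp [Fmat, Matrix.one_apply] <;> linarith

def Q00v (θ η δ : ℝ) : ℝ := ∫ s in (0:ℝ)..δ, η^2 * fOU θ s^2
def Q01v (θ η δ : ℝ) : ℝ := ∫ s in (0:ℝ)..δ, η^2 * (fOU θ s * Real.exp (-(θ * s)))
def Q11v (θ η δ : ℝ) : ℝ := ∫ s in (0:ℝ)..δ, η^2 * Real.exp (-(θ * s))^2

lemma Qmat_eq (θ η δ : ℝ) :
    Qmat θ η δ = !![Q00v θ η δ, Q01v θ η δ; Q01v θ η δ, Q11v θ η δ] := by
  have hint : ∀ s : ℝ, (NormedSpace.exp (s • Fmat θ) * (Lmat η * (Lmat η)ᵀ) *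
      NormedSpace.exp (s • (Fmat θ)ᵀ)) =
      !![η^2 * fOU θ s^2, η^2 * (fOU θ s * Real.exp (-(θ * s)));
         η^2 * (fOU θ s * Real.exp (-(θ * s))), η^2 * Real.exp (-(θ * s))^2] := by
    intro s
    rw [← Matrix.transpose_smul, Matrix.exp_transpose, exp_Fmat_explicit]
    ext i j
    fin_cases i <;> fin_cases j <;>
      simp [Lmat, Matrix.mul_apply, Fin.sum_univ_succ, Matrix.vecHead, Matrix.vecTail, Matrix.vecMul, dotProduct] <;> ring
  ext i j
  fin_cases i <;> fin_cases j <;>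
    · show (∫ s in (0:ℝ)..δ, _) = _
      simp_rw [hint]
      simp [Q00v, Q01v, Q11v]

lemma inv_one_by_one (x : ℝ) : (!![x] : Matrix (Fin 1) (Fin 1) ℝ)⁻¹ = !![x⁻¹] := by
  rw [Matrix.inv_def, Matrix.adjugate_fin_one, Matrix.det_fin_one_of]
  ext i j
  fin_cases i; fin_cases j
  simp [Ring.inverse_eq_inv']

lemma key_step (f E p q00 q01 q11 : ℝ) (hq11 : q11 ≠ 0) :
    (((1 : Matrix (Fin 2) (Fin 2) ℝ) -
        (!![1, f; 0, E] * Matrix.diagonal ![p, 0] * (!![1, f; 0, E])ᵀ + !![q00, q01; q01, q11]) *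
          H1rowᵀ *
          (H1row * (!![1, f; 0, E] * Matrix.diagonal ![p, 0] * (!![1, f; 0, E])ᵀ +
            !![q00, q01; q01, q11]) * H1rowᵀ)⁻¹ * H1row) *
      (!![1, f; 0, E] * Matrix.diagonal ![p, 0] * (!![1, f; 0, E])ᵀ + !![q00, q01; q01, q11])) 0 0
    = p + q00 - q01^2 / q11 := by
  have hPm : !![1, f; 0, E] * Matrix.diagonal ![p, 0] * (!![1, f; 0, E])ᵀ + !![q00, q01; q01, q11]
      = !![p + q00, q01; q01, q11] := by
    ext i j
    fin_cases i <;> fin_cases j <;>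
      simp [Matrix.mul_apply, Fin.sum_univ_succ, Matrix.diagonal, Matrix.vecHead, Matrix.vecTail, Matrix.vecMul, dotProduct] <;> ring
  rw [hPm]
  have h1 : H1row * !![p + q00, q01; q01, q11] * H1rowᵀ = !![q11] := by
    ext i j
    fin_cases i; fin_cases j
    simp [H1row, Matrix.mul_apply, Fin.sum_univ_succ]
  rw [h1, inv_one_by_one]
  have : ((1 : Matrix (Fin 2) (Fin 2) ℝ) -
      !![p + q00, q01; q01, q11] * H1rowᵀ * !![q11⁻¹] * H1row) *
      !![p + q00, q01; q01, q11]
      = Matrix.of fun i j => (!![p + q00 - q01 * q11⁻¹ * q01, q01 - q11*q11⁻¹*q01;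
          q01 - q01*q11⁻¹*q11, q11 - q11*q11⁻¹*q11] : Matrix (Fin 2) (Fin 2) ℝ) i j := by
    ext i j
    fin_cases i <;> fin_cases j <;>
      simp [H1row, Matrix.mul_apply, Fin.sum_univ_succ, Matrix.one_apply, Matrix.vecHead, Matrix.vecTail, Matrix.vecMul, dotProduct, mul_inv_cancel₀ hq11] <;> field_simp <;> ring
  rw [this]
  show p + q00 - q01 * q11⁻¹ * q01 = _
  field_simp

lemma pvar_succ (θ η δ : ℝ) (hq11 : Q11v θ η δ ≠ 0) (k : ℕ) :
    pvar θ η δ (k+1) = pvar θ η δ k + Q00v θ η δ - (Q01v θ η δ)^2 / Q11v θ η δ := by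
  have hA : Amat θ δ = !![1, fOU θ δ; 0, Real.exp (-(θ * δ))] := exp_Fmat_explicit θ δ
  rw [pvar, Qmat_eq, hA]
  exact key_step _ _ _ _ _ _ hq11

lemma pvar_eq (θ η δ : ℝ) (hq11 : Q11v θ η δ ≠ 0) (n : ℕ) :
    pvar θ η δ n = n * (Q00v θ η δ - (Q01v θ η δ)^2 / Q11v θ η δ) := by
  induction n with
  | zero => simp [pvar]
  | succ n ih => rw [pvar_succ θ η δ hq11 n, ih]; push_cast; ring

lemma exp_neg_lb (x : ℝ) : 1 - x ≤ Real.exp (-x) := by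
  have := Real.add_one_le_exp (-x); linarith

lemma exp_neg_ub (x : ℝ) (hx : 0 ≤ x) : Real.exp (-x) ≤ 1 - x + x^2/2 := by
  have hq := Real.quadratic_le_exp_of_nonneg hx
  have hmul : Real.exp (-x) * Real.exp x = 1 := by rw [← Real.exp_add]; simp
  nlinarith [Real.exp_pos (-x), Real.exp_pos x, sq_nonneg (x^2), sq_nonneg x,
    mul_le_mul_of_nonneg_left hq (Real.exp_pos (-x)).le]

lemma abs_exp_neg (x : ℝ) (hx : 0 ≤ x) : |Real.exp (-x) - (1 - x)| ≤ x^2/2 := by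
  rw [abs_le]
  constructor
  · have := exp_neg_lb x; nlinarith
  · have := exp_neg_ub x hx; linarith

lemma integral_linear (θ s : ℝ) : (∫ u in (0:ℝ)..s, (1 - θ * u)) = s - θ * s^2/2 := by
  rw [intervalIntegral.integral_sub intervalIntegrable_const
    (Continuous.intervalIntegrable (by continuity : Continuous fun u : ℝ => θ * u) _ _)]
  rw [intervalIntegral.integral_const_mul, integral_id]
  simp
  ring

lemma fOU_approx (θ s : ℝ) (hθ : 0 ≤ θ) (hs : 0 ≤ s) :
    |fOU θ s - (s - θ * s^2/2)| ≤ θ^2/2 * s^2 * s := by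
  have hsub : fOU θ s - (s - θ * s^2/2)
      = ∫ u in (0:ℝ)..s, (Real.exp (-(θ * u)) - (1 - θ * u)) := by
    rw [intervalIntegral.integral_sub
      (Continuous.intervalIntegrable (by continuity : Continuous fun u : ℝ => Real.exp (-(θ * u))) _ _)
      (Continuous.intervalIntegrable (by continuity : Continuous fun u : ℝ => 1 - θ * u) _ _),
      integral_linear]
    rfl
  rw [hsub]
  have h := intervalIntegral.norm_integral_le_of_norm_le_const
    (C := θ^2/2 * s^2) (f := fun u => Real.exp (-(θ * u)) - (1 - θ * u)) (a := (0:ℝ)) (b := s) ?_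
  · rw [Real.norm_eq_abs] at h
    calc |∫ u in (0:ℝ)..s, (Real.exp (-(θ * u)) - (1 - θ * u))| ≤ θ^2/2 * s^2 * |s - 0| := h
    _ = θ^2/2 * s^2 * s := by rw [sub_zero, abs_of_nonneg hs]
  · intro u hu
    rw [Set.uIoc_of_le hs] at hu
    obtain ⟨hu0, hus⟩ := hu
    rw [Real.norm_eq_abs]
    have := abs_exp_neg (θ * u) (by positivity)
    calc |Real.exp (-(θ * u)) - (1 - θ * u)| ≤ (θ*u)^2/2 := this
    _ = θ^2/2 * u^2 := by ring
    _ ≤ θ^2/2 * s^2 := by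
        have hu2 : u^2 ≤ s^2 := by nlinarith
        nlinarith [sq_nonneg θ]
  
lemma fOU_abs_le (θ s : ℝ) (hθ : 0 ≤ θ) (hs : 0 ≤ s) : |fOU θ s| ≤ s := by
  have h := intervalIntegral.norm_integral_le_of_norm_le_const
    (C := 1) (f := fun u => Real.exp (-(θ * u))) (a := (0:ℝ)) (b := s) ?_
  · rw [Real.norm_eq_abs] at h
    calc |fOU θ s| ≤ 1 * |s - 0| := h
    _ = s := by rw [sub_zero, abs_of_nonneg hs, one_mul]
  · intro u hu
    rw [Set.uIoc_of_le hs] at hu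
    rw [Real.norm_eq_abs, abs_of_pos (Real.exp_pos _)]
    rw [Real.exp_le_one_iff]
    nlinarith [hu.1]

lemma continuous_fOU (θ : ℝ) : Continuous (fOU θ) :=
  intervalIntegral.continuous_primitive
    (fun a b => Continuous.intervalIntegrable
      (by continuity : Continuous fun u : ℝ => Real.exp (-(θ * u))) a b) 0

lemma abs_mul_le {x y a b : ℝ} (hx : |x| ≤ a) (hy : |y| ≤ b) : |x*y| ≤ a*b := by
  rw [abs_mul]; exact mul_le_mul hx hy (abs_nonneg _) ((abs_nonneg x).trans hx)

section pointwise
variable {θ s δ : ℝ} (hθ : 0 ≤ θ) (hs0 : 0 ≤ s) (hsδ : s ≤ δ) (hδ1 : δ ≤ 1)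
include hθ hs0 hsδ hδ1

lemma pt0 : |(fOU θ s)^2 - (s^2 - θ*s^3)| ≤ θ^2*(5+θ)/4 * δ^4 := by
  have hδ0 : (0:ℝ) ≤ δ := hs0.trans hsδ
  have hX := fOU_approx θ s hθ hs0
  have hf := fOU_abs_le θ s hθ hs0
  have hid : (fOU θ s)^2 - (s^2 - θ*s^3)
      = (fOU θ s - (s - θ*s^2/2))*(fOU θ s + (s - θ*s^2/2)) + θ^2*s^4/4 := by ring
  rw [hid]
  have ha : |fOU θ s + (s - θ*s^2/2)| ≤ s + (s + θ*s^2/2) := by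
    calc |fOU θ s + (s - θ*s^2/2)| ≤ |fOU θ s| + |s - θ*s^2/2| := abs_add_le _ _
    _ ≤ s + (s + θ*s^2/2) := by
        have : |s - θ*s^2/2| ≤ s + θ*s^2/2 := by
          rw [abs_le]; constructor <;> nlinarith
        linarith
  calc |(fOU θ s - (s - θ*s^2/2))*(fOU θ s + (s - θ*s^2/2)) + θ^2*s^4/4|
      ≤ |(fOU θ s - (s - θ*s^2/2))*(fOU θ s + (s - θ*s^2/2))| + |θ^2*s^4/4| := abs_add_le _ _
    _ ≤ θ^2/2*s^2*s * (s + (s + θ*s^2/2)) + θ^2*s^4/4 := by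
        rw [abs_of_nonneg (by positivity : (0:ℝ) ≤ θ^2*s^4/4)]
        gcongr
        exact abs_mul_le hX ha
    _ ≤ θ^2*(5+θ)/4 * δ^4 := by
        have h4 : s^4 ≤ δ^4 := pow_le_pow_left₀ hs0 hsδ 4
        have h5 : s^5 ≤ δ^5 := pow_le_pow_left₀ hs0 hsδ 5
        have h54 : δ^5 ≤ δ^4 := pow_le_pow_of_le_one hδ0 hδ1 (by norm_num)
        nlinarith [mul_le_mul_of_nonneg_left h4 (sq_nonneg θ),
          mul_le_mul_of_nonneg_left (h5.trans h54) (pow_nonneg hθ 3)]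

lemma pt1 : |fOU θ s * Real.exp (-(θ*s)) - (s - 3*θ/2*s^2)| ≤ θ^2*(6+θ)/4 * δ^3 := by
  have hδ0 : (0:ℝ) ≤ δ := hs0.trans hsδ
  have hX := fOU_approx θ s hθ hs0
  have hY := abs_exp_neg (θ*s) (by positivity)
  have hE1 : |Real.exp (-(θ*s))| ≤ 1 := by
    rw [abs_of_pos (Real.exp_pos _), Real.exp_le_one_iff]; nlinarith
  have hid : fOU θ s * Real.exp (-(θ*s)) - (s - 3*θ/2*s^2)
      = (fOU θ s - (s - θ*s^2/2)) * Real.exp (-(θ*s))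
        + (s - θ*s^2/2) * (Real.exp (-(θ*s)) - (1 - θ*s)) + θ^2*s^3/2 := by ring
  rw [hid]
  have hB : |s - θ*s^2/2| ≤ s + θ*s^2/2 := by
    rw [abs_le]; constructor <;> nlinarith
  calc |(fOU θ s - (s - θ*s^2/2)) * Real.exp (-(θ*s))
        + (s - θ*s^2/2) * (Real.exp (-(θ*s)) - (1 - θ*s)) + θ^2*s^3/2|
      ≤ |(fOU θ s - (s - θ*s^2/2)) * Real.exp (-(θ*s))
        + (s - θ*s^2/2) * (Real.exp (-(θ*s)) - (1 - θ*s))| + |θ^2*s^3/2| := abs_add_le _ _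
    _ ≤ |(fOU θ s - (s - θ*s^2/2)) * Real.exp (-(θ*s))|
        + |(s - θ*s^2/2) * (Real.exp (-(θ*s)) - (1 - θ*s))| + |θ^2*s^3/2| := by
        have := abs_add_le ((fOU θ s - (s - θ*s^2/2)) * Real.exp (-(θ*s)))
          ((s - θ*s^2/2) * (Real.exp (-(θ*s)) - (1 - θ*s)))
        linarith
    _ ≤ (θ^2/2*s^2*s) * 1 + (s + θ*s^2/2) * ((θ*s)^2/2) + θ^2*s^3/2 := by
        rw [abs_of_nonneg (by positivity : (0:ℝ) ≤ θ^2*s^3/2)]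
        gcongr <;> [exact abs_mul_le hX hE1; exact abs_mul_le hB hY]
    _ ≤ θ^2*(6+θ)/4 * δ^3 := by
        have h3 : s^3 ≤ δ^3 := pow_le_pow_left₀ hs0 hsδ 3
        have h4 : s^4 ≤ δ^4 := pow_le_pow_left₀ hs0 hsδ 4
        have h43 : δ^4 ≤ δ^3 := pow_le_pow_of_le_one hδ0 hδ1 (by norm_num)
        nlinarith [mul_le_mul_of_nonneg_left h3 (sq_nonneg θ),
          mul_le_mul_of_nonneg_left (h4.trans h43) (pow_nonneg hθ 3)]

lemma pt2 : |Real.exp (-(θ*s))^2 - (1 - 2*θ*s)| ≤ θ^2*(4+θ)/2 * δ^2 := by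
  have hδ0 : (0:ℝ) ≤ δ := hs0.trans hsδ
  have hY := abs_exp_neg (θ*s) (by positivity)
  have hE1 : |Real.exp (-(θ*s))| ≤ 1 := by
    rw [abs_of_pos (Real.exp_pos _), Real.exp_le_one_iff]; nlinarith
  have hid : Real.exp (-(θ*s))^2 - (1 - 2*θ*s)
      = (Real.exp (-(θ*s)) - (1 - θ*s)) * (Real.exp (-(θ*s)) + (1 - θ*s)) + θ^2*s^2 := by ring
  rw [hid]
  have ha : |Real.exp (-(θ*s)) + (1 - θ*s)| ≤ 1 + (1 + θ*s) := by
    calc |Real.exp (-(θ*s)) + (1 - θ*s)| ≤ |Real.exp (-(θ*s))| + |1 - θ*s| := abs_add_le _ _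
    _ ≤ 1 + (1 + θ*s) := by
        have : |1 - θ*s| ≤ 1 + θ*s := by rw [abs_le]; constructor <;> nlinarith
        linarith
  calc |(Real.exp (-(θ*s)) - (1 - θ*s)) * (Real.exp (-(θ*s)) + (1 - θ*s)) + θ^2*s^2|
      ≤ |(Real.exp (-(θ*s)) - (1 - θ*s)) * (Real.exp (-(θ*s)) + (1 - θ*s))| + |θ^2*s^2| :=
        abs_add_le _ _
    _ ≤ (θ*s)^2/2 * (1 + (1 + θ*s)) + θ^2*s^2 := by
        rw [abs_of_nonneg (by positivity : (0:ℝ) ≤ θ^2*s^2)]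
        gcongr
        exact abs_mul_le hY ha
    _ ≤ θ^2*(4+θ)/2 * δ^2 := by
        have h2 : s^2 ≤ δ^2 := pow_le_pow_left₀ hs0 hsδ 2
        have h3 : s^3 ≤ δ^3 := pow_le_pow_left₀ hs0 hsδ 3
        have h32 : δ^3 ≤ δ^2 := pow_le_pow_of_le_one hδ0 hδ1 (by norm_num)
        nlinarith [mul_le_mul_of_nonneg_left h2 (sq_nonneg θ),
          mul_le_mul_of_nonneg_left (h3.trans h32) (pow_nonneg hθ 3)]

end pointwise

lemma integral_est {g q : ℝ → ℝ} {δ P c : ℝ} (hδ : 0 ≤ δ)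
    (hg : IntervalIntegrable g volume 0 δ) (hq : IntervalIntegrable q volume 0 δ)
    (hP : (∫ s in (0:ℝ)..δ, q s) = P)
    (hc : ∀ s, 0 < s → s ≤ δ → |g s - q s| ≤ c) :
    |(∫ s in (0:ℝ)..δ, g s) - P| ≤ c * δ := by
  rw [← hP, ← intervalIntegral.integral_sub hg hq]
  have h := intervalIntegral.norm_integral_le_of_norm_le_const (C := c)
    (f := fun s => g s - q s) (a := (0:ℝ)) (b := δ) ?_
  · rw [Real.norm_eq_abs] at h
    calc |∫ s in (0:ℝ)..δ, (g s - q s)| ≤ c * |δ - 0| := h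
    _ = c * δ := by rw [sub_zero, abs_of_nonneg hδ]
  · intro u hu
    rw [Set.uIoc_of_le hδ] at hu
    exact hc u hu.1 hu.2

lemma poly0 (θ δ : ℝ) : (∫ s in (0:ℝ)..δ, (s^2 - θ*s^3)) = δ^3/3 - θ*δ^4/4 := by
  rw [intervalIntegral.integral_sub (Continuous.intervalIntegrable (by continuity) _ _)
    (Continuous.intervalIntegrable (by continuity : Continuous fun s:ℝ => θ*s^3) _ _),
    intervalIntegral.integral_const_mul, integral_pow, integral_pow]
  norm_num
  ring

lemma poly1 (θ δ : ℝ) : (∫ s in (0:ℝ)..δ, (s - 3*θ/2*s^2)) = δ^2/2 - θ/2*δ^3 := by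
  rw [intervalIntegral.integral_sub (Continuous.intervalIntegrable (by continuity) _ _)
    (Continuous.intervalIntegrable (by continuity : Continuous fun s:ℝ => 3*θ/2*s^2) _ _),
    intervalIntegral.integral_const_mul, integral_pow, integral_id]
  norm_num
  ring

lemma poly2 (θ δ : ℝ) : (∫ s in (0:ℝ)..δ, (1 - 2*θ*s)) = δ - θ*δ^2 := by
  rw [intervalIntegral.integral_sub intervalIntegrable_const
    (Continuous.intervalIntegrable (by continuity : Continuous fun s:ℝ => 2*θ*s) _ _),
    intervalIntegral.integral_const_mul, integral_id]
  norm_num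
  ring

variable {θ δ : ℝ}

lemma est0 (hθ : 0 ≤ θ) (hδ0 : 0 ≤ δ) (hδ1 : δ ≤ 1) :
    |(∫ s in (0:ℝ)..δ, (fOU θ s)^2) - (δ^3/3 - θ*δ^4/4)| ≤ θ^2*(5+θ)/4 * δ^5 := by
  have h := integral_est (c := θ^2*(5+θ)/4 * δ^4) hδ0
    (((continuous_fOU θ).pow 2).intervalIntegrable _ _)
    (Continuous.intervalIntegrable (by continuity : Continuous fun s:ℝ => s^2 - θ*s^3) _ _)
    (poly0 θ δ) (fun s hs0 hsδ => pt0 hθ hs0.le hsδ hδ1)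
  calc |(∫ s in (0:ℝ)..δ, (fOU θ s)^2) - (δ^3/3 - θ*δ^4/4)| ≤ θ^2*(5+θ)/4 * δ^4 * δ := h
  _ = θ^2*(5+θ)/4 * δ^5 := by ring

lemma est1 (hθ : 0 ≤ θ) (hδ0 : 0 ≤ δ) (hδ1 : δ ≤ 1) :
    |(∫ s in (0:ℝ)..δ, fOU θ s * Real.exp (-(θ*s))) - (δ^2/2 - θ/2*δ^3)|
      ≤ θ^2*(6+θ)/4 * δ^4 := by
  have h := integral_est (c := θ^2*(6+θ)/4 * δ^3) hδ0
    (((continuous_fOU θ).mul (by continuity)).intervalIntegrable _ _)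
    (Continuous.intervalIntegrable (by continuity : Continuous fun s:ℝ => s - 3*θ/2*s^2) _ _)
    (poly1 θ δ) (fun s hs0 hsδ => pt1 hθ hs0.le hsδ hδ1)
  calc |(∫ s in (0:ℝ)..δ, fOU θ s * Real.exp (-(θ*s))) - (δ^2/2 - θ/2*δ^3)|
      ≤ θ^2*(6+θ)/4 * δ^3 * δ := h
  _ = θ^2*(6+θ)/4 * δ^4 := by ring

lemma est2 (hθ : 0 ≤ θ) (hδ0 : 0 ≤ δ) (hδ1 : δ ≤ 1) :
    |(∫ s in (0:ℝ)..δ, Real.exp (-(θ*s))^2) - (δ - θ*δ^2)| ≤ θ^2*(4+θ)/2 * δ^3 := by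
  have h := integral_est (c := θ^2*(4+θ)/2 * δ^2) hδ0
    (Continuous.intervalIntegrable (by continuity : Continuous fun s:ℝ => Real.exp (-(θ*s))^2) _ _)
    (Continuous.intervalIntegrable (by continuity : Continuous fun s:ℝ => 1 - 2*θ*s) _ _)
    (poly2 θ δ) (fun s hs0 hsδ => pt2 hθ hs0.le hsδ hδ1)
  calc |(∫ s in (0:ℝ)..δ, Real.exp (-(θ*s))^2) - (δ - θ*δ^2)| ≤ θ^2*(4+θ)/2 * δ^2 * δ := h
  _ = θ^2*(4+θ)/2 * δ^3 := by ring

lemma est2lb (hθ : 0 ≤ θ) (hδ0 : 0 ≤ δ) (hδ1 : δ ≤ 1) :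
    δ * Real.exp (-(2*θ)) ≤ ∫ s in (0:ℝ)..δ, Real.exp (-(θ*s))^2 := by
  have h : ∀ s ∈ Set.Icc (0:ℝ) δ, Real.exp (-(2*θ)) ≤ Real.exp (-(θ*s))^2 := by
    intro s hs
    have : Real.exp (-(θ*s))^2 = Real.exp (-(2*θ*s)) := by
      rw [sq, ← Real.exp_add]; ring_nf
    rw [this, Real.exp_le_exp]
    nlinarith [hs.1, hs.2]
  calc δ * Real.exp (-(2*θ)) = ∫ _s in (0:ℝ)..δ, Real.exp (-(2*θ)) := by
        simp [mul_comm]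
  _ ≤ _ := intervalIntegral.integral_mono_on hδ0 intervalIntegrable_const
      (Continuous.intervalIntegrable (by continuity : Continuous fun s:ℝ => Real.exp (-(θ*s))^2) _ _) h

set_option maxHeartbeats 1000000 in
lemma main_alg {θ δ I0 I1 I2 c0 c1 c2 m : ℝ} (hθ : 0 ≤ θ) (hδ0 : 0 < δ) (hδ1 : δ ≤ 1)
    (hc0 : 0 ≤ c0) (hc1 : 0 ≤ c1) (hc2 : 0 ≤ c2) (hm : 0 < m)
    (h0 : |I0 - (δ^3/3 - θ*δ^4/4)| ≤ c0*δ^5)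
    (h1 : |I1 - (δ^2/2 - θ/2*δ^3)| ≤ c1*δ^4)
    (h2 : |I2 - (δ - θ*δ^2)| ≤ c2*δ^3)
    (hlb : δ*m ≤ I2) :
    |(I0 - I1^2/I2) - δ^3/12| ≤ (c0 + (2*(1+θ)*c1 + c1^2 + (1+θ)*c2)/m) * δ^5 := by
  have hI2pos : 0 < I2 := lt_of_lt_of_le (by positivity) hlb
  set d : ℝ := 2*(1+θ)*c1 + c1^2 + (1+θ)*c2 with hd
  have hdnn : 0 ≤ d := by positivity
  have hkey : |I1^2 - (δ^3/4 - θ*δ^4/4)*I2| ≤ d * δ^6 := by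
    have hid : I1^2 - (δ^3/4 - θ*δ^4/4)*I2
        = 2*(δ^2/2 - θ/2*δ^3)*(I1 - (δ^2/2 - θ/2*δ^3))
          + (I1 - (δ^2/2 - θ/2*δ^3))*(I1 - (δ^2/2 - θ/2*δ^3))
          + (-(δ^3/4 - θ*δ^4/4))*(I2 - (δ - θ*δ^2)) := by ring
    rw [hid]
    have hP1 : |2*(δ^2/2 - θ/2*δ^3)| ≤ (1+θ)*δ^2 := by
      have h32 : δ^3 ≤ δ^2 := pow_le_pow_of_le_one hδ0.le hδ1 (by norm_num)
      rw [abs_le]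
      constructor <;>
        nlinarith [mul_le_mul_of_nonneg_left h32 hθ, mul_nonneg hθ (pow_nonneg hδ0.le 3),
          mul_nonneg hθ (pow_nonneg hδ0.le 2)]
    have ht : |(-(δ^3/4 - θ*δ^4/4))| ≤ (1+θ)*δ^3 := by
      have h43 : δ^4 ≤ δ^3 := pow_le_pow_of_le_one hδ0.le hδ1 (by norm_num)
      rw [abs_le]
      constructor <;>
        nlinarith [mul_le_mul_of_nonneg_left h43 hθ, mul_nonneg hθ (pow_nonneg hδ0.le 4),
          mul_nonneg hθ (pow_nonneg hδ0.le 3)]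
    have habs : ∀ x y a b : ℝ, |x| ≤ a → |y| ≤ b → |x*y| ≤ a*b := by
      intro x y a b hx hy
      rw [abs_mul]; exact mul_le_mul hx hy (abs_nonneg _) ((abs_nonneg x).trans hx)
    calc |2*(δ^2/2 - θ/2*δ^3)*(I1 - (δ^2/2 - θ/2*δ^3))
          + (I1 - (δ^2/2 - θ/2*δ^3))*(I1 - (δ^2/2 - θ/2*δ^3))
          + (-(δ^3/4 - θ*δ^4/4))*(I2 - (δ - θ*δ^2))|
        ≤ |2*(δ^2/2 - θ/2*δ^3)*(I1 - (δ^2/2 - θ/2*δ^3))|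
          + |(I1 - (δ^2/2 - θ/2*δ^3))*(I1 - (δ^2/2 - θ/2*δ^3))|
          + |(-(δ^3/4 - θ*δ^4/4))*(I2 - (δ - θ*δ^2))| := abs_add_three _ _ _
      _ ≤ ((1+θ)*δ^2)*(c1*δ^4) + (c1*δ^4)*(c1*δ^4) + ((1+θ)*δ^3)*(c2*δ^3) := by
          gcongr ?_ + ?_ + ?_
          · exact habs _ _ _ _ hP1 h1
          · exact habs _ _ _ _ h1 h1
          · exact habs _ _ _ _ ht h2
      _ ≤ d * δ^6 := by
          have h86 : δ^8 ≤ δ^6 := pow_le_pow_of_le_one hδ0.le hδ1 (by norm_num)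
          rw [hd]
          nlinarith [mul_le_mul_of_nonneg_left h86 (mul_nonneg hc1 hc1),
            mul_nonneg (mul_nonneg (by linarith : (0:ℝ) ≤ 1+θ) hc1) (pow_nonneg hδ0.le 6)]
  have hquot : |I1^2/I2 - (δ^3/4 - θ*δ^4/4)| ≤ d/m * δ^5 := by
    have hrw : I1^2/I2 - (δ^3/4 - θ*δ^4/4) = (I1^2 - (δ^3/4 - θ*δ^4/4)*I2)/I2 := by
      field_simp
    rw [hrw, abs_div, abs_of_pos hI2pos]
    calc |I1^2 - (δ^3/4 - θ*δ^4/4)*I2|/I2 ≤ (d*δ^6)/(δ*m) := by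
          apply div_le_div₀ (by positivity) hkey (by positivity) hlb
      _ = d/m * δ^5 := by field_simp
  have hsplit : (I0 - I1^2/I2) - δ^3/12
      = (I0 - (δ^3/3 - θ*δ^4/4)) - (I1^2/I2 - (δ^3/4 - θ*δ^4/4)) := by ring
  rw [hsplit]
  calc |(I0 - (δ^3/3 - θ*δ^4/4)) - (I1^2/I2 - (δ^3/4 - θ*δ^4/4))|
      ≤ |I0 - (δ^3/3 - θ*δ^4/4)| + |I1^2/I2 - (δ^3/4 - θ*δ^4/4)| := abs_sub _ _
    _ ≤ c0*δ^5 + d/m*δ^5 := add_le_add h0 hquot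
    _ = (c0 + d/m) * δ^5 := by ring

/-- The EKF0 variance recursion of the Gaussian mixture SDE filter satisfies
`p_n = n·η²·δ³/12 + O(n·δ⁵)`, with a constant depending only on `θ`, `η` and `T`. -/
theorem mixture_filter_variance_expansion (θ η T : ℝ) (hθ : 0 ≤ θ) (hη : 0 < η) (hT : 0 < T) :
    ∃ C : ℝ, 0 < C ∧ ∀ δ : ℝ, 0 < δ → δ ≤ 1 → ∀ n : ℕ, 1 ≤ n → (n : ℝ) ≤ T / δ →
      |pvar θ η δ n - (n : ℝ) * η ^ 2 * δ ^ 3 / 12| ≤ C * n * δ ^ 5 := by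
  set c0 : ℝ := θ^2*(5+θ)/4 with hc0def
  set c1 : ℝ := θ^2*(6+θ)/4 with hc1def
  set c2 : ℝ := θ^2*(4+θ)/2 with hc2def
  set m : ℝ := Real.exp (-(2*θ)) with hmdef
  have hc0 : 0 ≤ c0 := by rw [hc0def]; nlinarith [sq_nonneg θ]
  have hc1 : 0 ≤ c1 := by rw [hc1def]; nlinarith [sq_nonneg θ]
  have hc2 : 0 ≤ c2 := by rw [hc2def]; nlinarith [sq_nonneg θ]
  have hm : 0 < m := Real.exp_pos _
  set K : ℝ := c0 + (2*(1+θ)*c1 + c1^2 + (1+θ)*c2)/m with hKdef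
  have hK : 0 ≤ K := by
    rw [hKdef]
    have h1 : 0 ≤ (2*(1+θ)*c1 + c1^2 + (1+θ)*c2)/m := by
      apply div_nonneg _ hm.le
      nlinarith [sq_nonneg c1]
    linarith
  refine ⟨η^2*K + 1, by nlinarith [sq_nonneg η, mul_nonneg (sq_nonneg η) hK], ?_⟩
  intro δ hδ0 hδ1 n hn1 hnT
  set I0 : ℝ := ∫ s in (0:ℝ)..δ, (fOU θ s)^2 with hI0def
  set I1 : ℝ := ∫ s in (0:ℝ)..δ, fOU θ s * Real.exp (-(θ*s)) with hI1def
  set I2 : ℝ := ∫ s in (0:ℝ)..δ, Real.exp (-(θ*s))^2 with hI2def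
  have hlb : δ*m ≤ I2 := by
    rw [hI2def, hmdef]; exact est2lb hθ hδ0.le hδ1
  have hI2pos : 0 < I2 := lt_of_lt_of_le (by positivity) hlb
  have hQ00 : Q00v θ η δ = η^2 * I0 := by
    rw [Q00v, hI0def]; exact intervalIntegral.integral_const_mul _ _
  have hQ01 : Q01v θ η δ = η^2 * I1 := by
    rw [Q01v, hI1def]; exact intervalIntegral.integral_const_mul _ _
  have hQ11 : Q11v θ η δ = η^2 * I2 := by
    rw [Q11v, hI2def]; exact intervalIntegral.integral_const_mul _ _
  have hq11 : Q11v θ η δ ≠ 0 := by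
    rw [hQ11]; positivity
  have h0' : |I0 - (δ^3/3 - θ*δ^4/4)| ≤ c0*δ^5 := est0 hθ hδ0.le hδ1
  have h1' : |I1 - (δ^2/2 - θ/2*δ^3)| ≤ c1*δ^4 := est1 hθ hδ0.le hδ1
  have h2' : |I2 - (δ - θ*δ^2)| ≤ c2*δ^3 := est2 hθ hδ0.le hδ1
  have halg : |(I0 - I1^2/I2) - δ^3/12| ≤ K * δ^5 :=
    main_alg hθ hδ0 hδ1 hc0 hc1 hc2 hm h0' h1' h2' hlb
  have hg : Q00v θ η δ - (Q01v θ η δ)^2/Q11v θ η δ = η^2 * (I0 - I1^2/I2) := by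
    rw [hQ00, hQ01, hQ11]
    field_simp
  rw [pvar_eq θ η δ hq11 n, hg]
  have hsplit : (n:ℝ) * (η^2 * (I0 - I1^2/I2)) - (n:ℝ)*η^2*δ^3/12
      = (n:ℝ)*η^2*((I0 - I1^2/I2) - δ^3/12) := by ring
  rw [hsplit, abs_mul, abs_of_nonneg (by positivity : (0:ℝ) ≤ (n:ℝ)*η^2)]
  calc (n:ℝ)*η^2 * |(I0 - I1^2/I2) - δ^3/12| ≤ (n:ℝ)*η^2*(K*δ^5) := by
        apply mul_le_mul_of_nonneg_left halg (by positivity)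
    _ ≤ (η^2*K + 1)*n*δ^5 := by
        nlinarith [mul_nonneg (Nat.cast_nonneg n : (0:ℝ) ≤ n) (pow_nonneg hδ0.le 5)]
end
end

section
/- Consider the affine Kalman filter recursion in dimension D with zero initial covariance and zero measurement noise: m⁻_k = A·m_{k−1}, P⁻_k = A·P_{k−1}·Aᵀ + Q, S_k = H̃·P⁻_k·H̃ᵀ, K_k = P⁻_k·H̃ᵀ·S_k⁻¹, m_k = m⁻_k − K_k·((H̃ − G_k)·m⁻_k − g_k), P_k = (I − K_k·H̃)·P⁻_k, started from a given m₀ ∈ ℝ^D and P₀ = 0, and assume S_k > 0 for all k = 1, …, N. For η > 0, let (m'_k, P'_k) be defined by the same recursion with Q replaced by η²·Q, starting from m'₀ = m₀ and P'₀ = 0. Then for all 0 ≤ k ≤ N: m'_k = m_k and P'_k = η²·P_k. -/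
open Matrix

noncomputable section

private lemma inv_smul_fin_one (S : Matrix (Fin 1) (Fin 1) ℝ) (h : S 0 0 ≠ 0) (c : ℝ)
    (hc : c ≠ 0) : (c • S)⁻¹ = c⁻¹ • S⁻¹ := by
  have hdet : IsUnit S.det := by
    rw [Matrix.det_fin_one]; exact isUnit_iff_ne_zero.mpr h
  simpa [Units.smul_def, Units.val_inv_eq_inv_val, Units.val_mk0] using Matrix.inv_smul' (A := S) (Units.mk0 c hc) hdet

/-- Scaling property of the affine Kalman filter recursion underlying the quasi
maximum-likelihood calibration: replacing the noise covariance `Q` by `η²·Q` (zero initial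
covariance, zero measurement noise) leaves all posterior means unchanged and scales all
posterior covariances by `η²`. -/
theorem kalman_filter_diffusion_scaling (D N : ℕ) (η : ℝ) (hη : 0 < η)
    (A Q : Matrix (Fin D) (Fin D) ℝ) (hQ : Q.PosSemidef)
    (Htil : Matrix (Fin 1) (Fin D) ℝ)
    (G : ℕ → Matrix (Fin 1) (Fin D) ℝ) (g : ℕ → ℝ)
    (m₀ : Matrix (Fin D) (Fin 1) ℝ)
    (m m' : ℕ → Matrix (Fin D) (Fin 1) ℝ) (Pf Pf' : ℕ → Matrix (Fin D) (Fin D) ℝ)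
    (hm0 : m 0 = m₀) (hP0 : Pf 0 = 0) (hm0' : m' 0 = m₀) (hP0' : Pf' 0 = 0)
    -- the predicted residual variances S_k, k = 1, …, N, are positive
    (hS : ∀ k < N, 0 < (Htil * (A * Pf k * Aᵀ + Q) * Htilᵀ) 0 0)
    -- Kalman recursion with noise covariance Q
    (hrec : ∀ k < N,
      m (k + 1) = A * m k -
        (A * Pf k * Aᵀ + Q) * Htilᵀ * (Htil * (A * Pf k * Aᵀ + Q) * Htilᵀ)⁻¹ *
          ((Htil - G (k + 1)) * (A * m k) - g (k + 1) • (1 : Matrix (Fin 1) (Fin 1) ℝ)) ∧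
      Pf (k + 1) = ((1 : Matrix (Fin D) (Fin D) ℝ) -
        (A * Pf k * Aᵀ + Q) * Htilᵀ * (Htil * (A * Pf k * Aᵀ + Q) * Htilᵀ)⁻¹ * Htil) *
        (A * Pf k * Aᵀ + Q))
    -- Kalman recursion with noise covariance η²·Q
    (hrec' : ∀ k < N,
      m' (k + 1) = A * m' k -
        (A * Pf' k * Aᵀ + η ^ 2 • Q) * Htilᵀ *
          (Htil * (A * Pf' k * Aᵀ + η ^ 2 • Q) * Htilᵀ)⁻¹ *
          ((Htil - G (k + 1)) * (A * m' k) - g (k + 1) • (1 : Matrix (Fin 1) (Fin 1) ℝ)) ∧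
      Pf' (k + 1) = ((1 : Matrix (Fin D) (Fin D) ℝ) -
        (A * Pf' k * Aᵀ + η ^ 2 • Q) * Htilᵀ *
          (Htil * (A * Pf' k * Aᵀ + η ^ 2 • Q) * Htilᵀ)⁻¹ * Htil) *
        (A * Pf' k * Aᵀ + η ^ 2 • Q)) :
    ∀ k ≤ N, m' k = m k ∧ Pf' k = η ^ 2 • Pf k := by
  intro k hk
  induction k with
  | zero => simp [hm0, hm0', hP0, hP0']
  | succ k ih =>
    have hk' : k < N := hk
    obtain ⟨hmk, hPk⟩ := ih (le_of_lt hk')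
    obtain ⟨h1, h2⟩ := hrec k hk'
    obtain ⟨h1', h2'⟩ := hrec' k hk'
    have hη2 : (η ^ 2 : ℝ) ≠ 0 := pow_ne_zero 2 (ne_of_gt hη)
    set Pm : Matrix (Fin D) (Fin D) ℝ := A * Pf k * Aᵀ + Q with hPm
    have hpred : A * Pf' k * Aᵀ + η ^ 2 • Q = η ^ 2 • Pm := by
      rw [hPk, hPm, smul_add, Matrix.mul_smul, Matrix.smul_mul]
    set S : Matrix (Fin 1) (Fin 1) ℝ := Htil * Pm * Htilᵀ with hSdef
    have hSpos : 0 < S 0 0 := hS k hk'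
    have hS' : Htil * (A * Pf' k * Aᵀ + η ^ 2 • Q) * Htilᵀ = η ^ 2 • S := by
      rw [hpred, Matrix.mul_smul, Matrix.smul_mul]
    have hinv : (Htil * (A * Pf' k * Aᵀ + η ^ 2 • Q) * Htilᵀ)⁻¹ = (η ^ 2)⁻¹ • S⁻¹ := by
      rw [hS', inv_smul_fin_one S (ne_of_gt hSpos) _ hη2]
    have hK : (A * Pf' k * Aᵀ + η ^ 2 • Q) * Htilᵀ *
        (Htil * (A * Pf' k * Aᵀ + η ^ 2 • Q) * Htilᵀ)⁻¹ = Pm * Htilᵀ * S⁻¹ := by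
      rw [hinv, hpred, Matrix.smul_mul, Matrix.smul_mul, Matrix.mul_smul, smul_smul,
        mul_inv_cancel₀ hη2, one_smul]
    constructor
    · rw [h1', h1, hmk, hK]
    · rw [h2', h2, hK, hpred, Matrix.mul_smul]
end
end
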